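/- Let V be a finite nonempty type, let E : V → V → Prop be a directed graph, and let Y : Set V be a set of output nodes. Assume the digraph is cyclic, i.e., there exists a permutation σ of V such that E i (σ i) holds for every i : V, and assume every node is output-connected, i.e., for every i : V there exists y ∈ Y with Relation.ReflTransGen E i y. Then there exists a matrix A : Matrix V V ℝ realizing the digraph pattern exactly, i.e., for all i j : V, A i j ≠ 0 ↔ E j i, such that the pair (A, C_Y) is observable, where C_Y : Matrix Y V ℝ is defined by C_Y y j = if (y : V) = j then 1 else 0. (Sufficiency direction of Theorem 1: a cyclic, output-connected system digraph is structurally observable.) -/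

import Mathlib

set_option maxHeartbeats 1000000
set_option linter.unusedSectionVars false

noncomputable section
namespace StructObs
open Matrix

attribute [local instance] Classical.propDecidable

variable {V : Type} [Fintype V] [DecidableEq V]

section Dist
variable (E : V → V → Prop) (Y : Set V)

/-- there is a walk of length `k` from `i` into `Y`. -/
def Chain (k : ℕ) (i : V) : Prop :=
  ∃ g : ℕ → V, g 0 = i ∧ (∀ m < k, E (g m) (g (m + 1))) ∧ g k ∈ Y

variable {E Y}

lemma chain_prepend {i j : V} {k : ℕ} (hij : E i j) (h : Chain E Y k j) :
    Chain E Y (k + 1) i := by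
  obtain ⟨g, hg0, hgs, hgY⟩ := h
  refine ⟨fun m => if m = 0 then i else g (m - 1), by simp, ?_, by simp [hgY]⟩
  intro m hm
  rcases Nat.eq_zero_or_pos m with rfl | hpos
  · simpa [hg0] using hij
  · have h1 : m ≠ 0 := hpos.ne'
    have h2 : m + 1 ≠ 0 := by omega
    simp only [h1, h2, if_false]
    have h3 : m - 1 + 1 = m := by omega
    have h4 := hgs (m - 1) (by omega)
    rwa [h3] at h4

lemma chain_exists (hout : ∀ i : V, ∃ y ∈ Y, Relation.ReflTransGen E i y) (i : V) :
    ∃ k, Chain E Y k i := by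
  obtain ⟨y, hy, hr⟩ := hout i
  induction hr using Relation.ReflTransGen.head_induction_on with
  | refl => exact ⟨0, fun _ => y, rfl, by omega, hy⟩
  | head hab _ ih =>
      obtain ⟨k, hk⟩ := ih
      exact ⟨k + 1, chain_prepend hab hk⟩

variable (hout : ∀ i : V, ∃ y ∈ Y, Relation.ReflTransGen E i y)

/-- distance to the output set. -/
def dY (i : V) : ℕ := Nat.find (chain_exists hout i)

lemma dY_spec (i : V) : Chain E Y (dY hout i) i := Nat.find_spec (chain_exists hout i)

lemma dY_min {i : V} {k : ℕ} (h : Chain E Y k i) : dY hout i ≤ k :=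
  Nat.find_le h

lemma dY_eq_zero_iff {i : V} : dY hout i = 0 ↔ i ∈ Y := by
  constructor
  · intro h
    obtain ⟨g, hg0, _, hgY⟩ := dY_spec hout i
    rw [h] at hgY; rwa [hg0] at hgY
  · intro h
    have : Chain E Y 0 i := ⟨fun _ => i, rfl, by omega, h⟩
    exact Nat.le_zero.mp (dY_min hout this)

lemma exists_step (i : V) (h : 0 < dY hout i) :
    ∃ j, E i j ∧ dY hout j = dY hout i - 1 := by
  obtain ⟨g, hg0, hgs, hgY⟩ := dY_spec hout i
  refine ⟨g 1, by rw [← hg0]; exact hgs 0 h, ?_⟩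
  have hle : dY hout (g 1) ≤ dY hout i - 1 := by
    apply dY_min
    refine ⟨fun m => g (m + 1), rfl, ?_, ?_⟩
    · intro m hm; exact hgs (m + 1) (by omega)
    · show g (dY hout i - 1 + 1) ∈ Y
      have h5 : dY hout i - 1 + 1 = dY hout i := by omega
      rw [h5]; exact hgY
  have hge : dY hout i ≤ dY hout (g 1) + 1 := by
    apply dY_min
    apply chain_prepend
    · rw [← hg0]; exact hgs 0 h
    · exact dY_spec hout (g 1)
  omega

/-- successor along a shortest path to `Y`. -/
def sY (i : V) : V :=
  if h : 0 < dY hout i then Classical.choose (exists_step hout i h) else i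

lemma sY_edge {i : V} (h : 0 < dY hout i) : E i (sY hout i) := by
  rw [sY, dif_pos h]; exact (Classical.choose_spec (exists_step hout i h)).1

lemma dY_sY {i : V} (h : 0 < dY hout i) : dY hout (sY hout i) = dY hout i - 1 := by
  rw [sY, dif_pos h]; exact (Classical.choose_spec (exists_step hout i h)).2

lemma sY_eq_self {i : V} (h : dY hout i = 0) : sY hout i = i := by
  rw [sY, dif_neg]; omega

end Dist

section Orbit
variable {E : V → V → Prop} {Y : Set V} (σ : Equiv.Perm V)
variable (hout : ∀ i : V, ∃ y ∈ Y, Relation.ReflTransGen E i y)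

/-- enumeration of `V`. -/
def en (i : V) : ℕ := ((Fintype.equivFin V) i : ℕ)

lemma en_lt (i : V) : en i < Fintype.card V := ((Fintype.equivFin V) i).isLt

lemma en_inj {i j : V} (h : en i = en j) : i = j := by
  have := Fin.ext (a := (Fintype.equivFin V) i) (b := (Fintype.equivFin V) j) h
  exact (Fintype.equivFin V).injective this

/-- lexicographic key (distance, enumeration). -/
def keyY (i : V) : ℕ := dY hout i * Fintype.card V + en i

lemma keyY_inj {i j : V} (h : keyY hout i = keyY hout j) : i = j := by
  have hi := en_lt i
  have hj := en_lt j
  unfold keyY at h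
  have : en i = en j := by
    rcases Nat.lt_trichotomy (dY hout i) (dY hout j) with hl | he | hl
    · nlinarith
    · rw [he] at h; omega
    · nlinarith
  exact en_inj this

lemma keyY_le_of_dlt {i j : V} (h : dY hout i < dY hout j) :
    keyY hout i < keyY hout j := by
  have hi := en_lt i
  unfold keyY
  nlinarith

/-- the canonical representative of the `σ`-orbit of `i` : the element with
minimal `keyY`. -/
def eN (i : V) : V := by
  classical
  exact (Finset.exists_min_image (Finset.univ.filter (fun j => σ.SameCycle i j))
    (keyY hout) ⟨i, by simp [Equiv.Perm.SameCycle.refl]⟩).choose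

lemma eN_spec (i : V) :
    σ.SameCycle i (eN σ hout i) ∧
      ∀ j, σ.SameCycle i j → keyY hout (eN σ hout i) ≤ keyY hout j := by
  classical
  have h := (Finset.exists_min_image (Finset.univ.filter (fun j => σ.SameCycle i j))
    (keyY hout) ⟨i, by simp [Equiv.Perm.SameCycle.refl]⟩).choose_spec
  obtain ⟨hmem, hmin⟩ := h
  refine ⟨(Finset.mem_filter.mp hmem).2, fun j hj => hmin j (by simp [hj])⟩

lemma eN_same (i : V) : σ.SameCycle i (eN σ hout i) := (eN_spec σ hout i).1

lemma eN_min (i : V) {j : V} (hj : σ.SameCycle i j) :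
    keyY hout (eN σ hout i) ≤ keyY hout j := (eN_spec σ hout i).2 j hj

lemma eN_const {i j : V} (h : σ.SameCycle i j) : eN σ hout i = eN σ hout j := by
  apply keyY_inj (hout := hout)
  have h1 := eN_min σ hout i (h.trans (eN_same σ hout j))
  have h2 := eN_min σ hout j (h.symm.trans (eN_same σ hout i))
  omega

lemma eN_idem (i : V) : eN σ hout (eN σ hout i) = eN σ hout i :=
  (eN_const σ hout (eN_same σ hout i)).symm

lemma eN_apply (i : V) : eN σ hout (σ i) = eN σ hout i :=
  (eN_const σ hout ⟨1, by simp⟩).symm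

lemma eN_pow_apply (m : ℕ) (i : V) : eN σ hout ((σ ^ m) i) = eN σ hout i :=
  (eN_const σ hout ⟨m, rfl⟩).symm

lemma dY_eN_le (i : V) : dY hout (eN σ hout i) ≤ dY hout i := by
  by_contra h
  exact absurd (eN_min σ hout i (Equiv.Perm.SameCycle.refl σ i))
    (not_le.mpr (keyY_le_of_dlt hout (by omega)))

/-- weight of the orbit of `i` (a positive natural, distinct across orbits). -/
def rN (i : V) : ℕ := en (eN σ hout i) + 1

lemma rN_pos (i : V) : 0 < rN σ hout i := Nat.succ_pos _

lemma rN_inj {i j : V} (h : rN σ hout i = rN σ hout j) :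
    eN σ hout i = eN σ hout j := by
  unfold rN at h
  exact en_inj (by omega)

lemma rN_const {i j : V} (h : eN σ hout i = eN σ hout j) :
    rN σ hout i = rN σ hout j := by unfold rN; rw [h]

/-- distance of the orbit of `i`. -/
def DN (i : V) : ℕ := dY hout (eN σ hout i)

lemma DN_rep {b : V} (hb : eN σ hout b = b) : DN σ hout b = dY hout b := by
  unfold DN; rw [hb]

end Orbit

section Eig
variable {E : V → V → Prop} {Y : Set V} (σ : Equiv.Perm V)
variable (hout : ∀ i : V, ∃ y ∈ Y, Relation.ReflTransGen E i y)

/-- the set of exit nodes whose exit edge lands at `j`. -/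
def Xf (j : V) : Finset V :=
  Finset.univ.filter (fun i => eN σ hout i = i ∧ 0 < dY hout i ∧ sY hout i = j)

lemma sameCycle_nat {a x : V} (h : σ.SameCycle a x) : ∃ m : ℕ, (σ ^ m) a = x := by
  obtain ⟨m, -, hm⟩ := h.exists_pow_eq'
  exact ⟨m, hm⟩

variable {v : V → ℂ} {lam : ℂ}

lemma block_source
    (hrow : ∀ j, (rN σ hout j : ℂ) * v (σ.symm j) + ∑ i ∈ Xf σ hout j, v i = lam * v j)
    {b x₀ : V} (hb : eN σ hout b = b) (hx₀ : eN σ hout x₀ = b) (hx : v x₀ ≠ 0)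
    (hch : ∀ i, eN σ hout i = i → 0 < dY hout i → eN σ hout (sY hout i) = b → v i = 0) :
    lam ≠ 0 ∧ (∀ x, eN σ hout x = b → v x ≠ 0) ∧
      lam ^ (orderOf σ) = ((rN σ hout b : ℂ)) ^ (orderOf σ) := by
  have hrb : (rN σ hout b : ℂ) ≠ 0 := by
    exact_mod_cast Nat.cast_ne_zero.mpr (rN_pos σ hout b).ne'
  have hrow' : ∀ j, eN σ hout j = b →
      (rN σ hout b : ℂ) * v (σ.symm j) = lam * v j := by
    intro j hj
    have hsum : ∑ i ∈ Xf σ hout j, v i = 0 := by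
      apply Finset.sum_eq_zero
      intro i hi
      rw [Xf, Finset.mem_filter] at hi
      obtain ⟨-, hrep, hd, hs⟩ := hi
      exact hch i hrep hd (by rw [hs, hj])
    have h := hrow j
    rw [hsum, add_zero] at h
    rwa [rN_const σ hout (hj.trans hb.symm)] at h
  have hlam : lam ≠ 0 := by
    intro h0
    have h := hrow' (σ x₀) (by rw [eN_apply, hx₀])
    rw [h0, zero_mul, Equiv.symm_apply_apply] at h
    exact hx (by
      have := mul_eq_zero.mp h
      tauto)
  have hq : ∀ m : ℕ, lam ^ m * v ((σ ^ m) x₀) = (rN σ hout b : ℂ) ^ m * v x₀ := by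
    intro m
    induction m with
    | zero => simp
    | succ m ih =>
        have happ : (σ ^ (m + 1)) x₀ = σ ((σ ^ m) x₀) := by
          rw [pow_succ']; rfl
        have hj : eN σ hout ((σ ^ (m + 1)) x₀) = b := by
          rw [eN_pow_apply, hx₀]
        have h := hrow' _ hj
        rw [happ, Equiv.symm_apply_apply] at h
        calc lam ^ (m + 1) * v ((σ ^ (m + 1)) x₀)
            = lam ^ m * (lam * v ((σ ^ (m + 1)) x₀)) := by ring
          _ = lam ^ m * ((rN σ hout b : ℂ) * v ((σ ^ m) x₀)) := by rw [happ, ← h]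
          _ = (rN σ hout b : ℂ) * (lam ^ m * v ((σ ^ m) x₀)) := by ring
          _ = (rN σ hout b : ℂ) ^ (m + 1) * v x₀ := by rw [ih]; ring
  have hnz : ∀ m : ℕ, v ((σ ^ m) x₀) ≠ 0 := by
    intro m hv0
    have := hq m
    rw [hv0, mul_zero] at this
    exact (mul_ne_zero (pow_ne_zero m hrb) hx) this.symm
  refine ⟨hlam, ?_, ?_⟩
  · intro x hxx
    have hsc : σ.SameCycle x₀ x :=
      ((eN_same σ hout x₀).trans (hx₀ ▸ (hxx ▸ (eN_same σ hout x)).symm))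
    obtain ⟨m, hm⟩ := sameCycle_nat σ hsc
    rw [← hm]; exact hnz m
  · have h := hq (orderOf σ)
    rw [pow_orderOf_eq_one σ, Equiv.Perm.one_apply] at h
    exact mul_right_cancel₀ hx h

lemma block_feed (hlam : lam ≠ 0)
    {b z : V} {γ : ℂ} (hγ : γ ≠ 0) (hz : eN σ hout z = b)
    (hrow' : ∀ j, eN σ hout j = b →
      (rN σ hout b : ℂ) * v (σ.symm j) + (if j = z then γ else 0) = lam * v j) :
    ∀ x, eN σ hout x = b → v x ≠ 0 := by
  have hrb : (rN σ hout b : ℂ) ≠ 0 := by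
    exact_mod_cast Nat.cast_ne_zero.mpr (rN_pos σ hout b).ne'
  have hz0 : v z ≠ 0 := by
    intro h0
    have hall : ∀ m : ℕ, v ((σ ^ m) z) = 0 := by
      intro m
      induction m with
      | zero => simpa using h0
      | succ m ih =>
          have happ : (σ ^ (m + 1)) z = σ ((σ ^ m) z) := by rw [pow_succ']; rfl
          by_cases hjz : (σ ^ (m + 1)) z = z
          · rw [hjz]; exact h0
          · have hj : eN σ hout ((σ ^ (m + 1)) z) = b := by rw [eN_pow_apply, hz]
            have h := hrow' _ hj
            rw [if_neg hjz, add_zero, happ, Equiv.symm_apply_apply, ih, mul_zero] at h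
            rcases mul_eq_zero.mp h.symm with h' | h'
            · exact absurd h' hlam
            · rw [happ]; exact h'
    have hω : 0 < orderOf σ := orderOf_pos σ
    have hsymm : σ.symm z = (σ ^ (orderOf σ - 1)) z := by
      apply (Equiv.symm_apply_eq σ).mpr
      have : σ ((σ ^ (orderOf σ - 1)) z) = (σ ^ (orderOf σ - 1 + 1)) z := by
        rw [pow_succ']; rfl
      rw [this, Nat.sub_add_cancel hω, pow_orderOf_eq_one σ, Equiv.Perm.one_apply]
    have h := hrow' z hz
    rw [if_pos rfl, hsymm, hall _, mul_zero, zero_add, h0, mul_zero] at h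
    exact hγ h
  have hnz : ∀ m : ℕ, v ((σ ^ m) z) ≠ 0 := by
    intro m
    induction m with
    | zero => simpa using hz0
    | succ m ih =>
        have happ : (σ ^ (m + 1)) z = σ ((σ ^ m) z) := by rw [pow_succ']; rfl
        by_cases hjz : (σ ^ (m + 1)) z = z
        · rw [hjz]; exact hz0
        · have hj : eN σ hout ((σ ^ (m + 1)) z) = b := by rw [eN_pow_apply, hz]
          have h := hrow' _ hj
          rw [if_neg hjz, add_zero, happ, Equiv.symm_apply_apply] at h
          intro hv0
          rw [← happ, hv0, mul_zero] at h
          exact (mul_ne_zero hrb ih) h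
  intro x hx
  have hsc : σ.SameCycle z x :=
    ((eN_same σ hout z).trans (hz ▸ (hx ▸ (eN_same σ hout x)).symm))
  obtain ⟨m, hm⟩ := sameCycle_nat σ hsc
  rw [← hm]; exact hnz m


theorem eig_output
    (hrow : ∀ j, (rN σ hout j : ℂ) * v (σ.symm j) + ∑ i ∈ Xf σ hout j, v i = lam * v j)
    (hv : v ≠ 0) : ∃ y, dY hout y = 0 ∧ v y ≠ 0 := by
  obtain ⟨x₀, hx₀⟩ : ∃ x, v x ≠ 0 := by
    by_contra h
    push_neg at h
    exact hv (funext fun x => h x)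
  set TS : Finset V :=
    Finset.univ.filter (fun b => eN σ hout b = b ∧ ∃ x, eN σ hout x = b ∧ v x ≠ 0) with hTSdef
  have hmemTS : ∀ b, b ∈ TS ↔ (eN σ hout b = b ∧ ∃ x, eN σ hout x = b ∧ v x ≠ 0) := by
    intro b
    rw [hTSdef, Finset.mem_filter]
    simp
  have hTSne : TS.Nonempty :=
    ⟨eN σ hout x₀, (hmemTS _).mpr ⟨eN_idem σ hout x₀, x₀, rfl, hx₀⟩⟩
  obtain ⟨bs, hbsTS, hbsmax⟩ := Finset.exists_max_image TS (DN σ hout) hTSne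
  obtain ⟨hbs_rep, xs, hxs, hxsne⟩ := (hmemTS bs).mp hbsTS
  -- no exit into the maximal block comes from a nonzero block
  have hch : ∀ i, eN σ hout i = i → 0 < dY hout i → eN σ hout (sY hout i) = bs → v i = 0 := by
    intro i hrep hd hsb
    by_contra hvi
    have hiTS : i ∈ TS := (hmemTS i).mpr ⟨hrep, i, hrep, hvi⟩
    have hle := hbsmax i hiTS
    have h1 : DN σ hout i = dY hout i := DN_rep σ hout hrep
    have h2 : DN σ hout bs = dY hout bs := DN_rep σ hout hbs_rep
    have h3 : dY hout bs = dY hout (eN σ hout (sY hout i)) := by rw [hsb]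
    have h4 := dY_eN_le σ hout (sY hout i)
    have h5 := dY_sY hout hd
    omega
  obtain ⟨hlam, hallbs, hpowbs⟩ := block_source σ hout hrow hbs_rep hxs hxsne hch
  -- uniqueness of source blocks
  have huniq : ∀ b, b ∈ TS →
      (∀ i, eN σ hout i = i → 0 < dY hout i → eN σ hout (sY hout i) = b → v i = 0) →
      b = bs := by
    intro b hbTS hchb
    obtain ⟨hb_rep, x1, hx1, hx1ne⟩ := (hmemTS b).mp hbTS
    obtain ⟨-, -, hpowb⟩ := block_source σ hout hrow hb_rep hx1 hx1ne hchb
    have hcc : ((rN σ hout b : ℂ)) ^ (orderOf σ) = ((rN σ hout bs : ℂ)) ^ (orderOf σ) := by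
      rw [← hpowb, ← hpowbs]
    have hnat : (rN σ hout b) ^ (orderOf σ) = (rN σ hout bs) ^ (orderOf σ) := by
      exact_mod_cast hcc
    have hr : rN σ hout b = rN σ hout bs :=
      Nat.pow_left_injective (orderOf_pos σ).ne' hnat
    have := rN_inj σ hout hr
    rw [hb_rep, hbs_rep] at this
    exact this
  -- the chain of blocks below bs
  set p : V → V := fun b => eN σ hout (sY hout (eN σ hout b)) with hpdef
  set c : ℕ → V := fun m => p^[m] bs with hcdef
  have hc0 : c 0 = bs := rfl
  have hcs : ∀ m, c (m + 1) = p (c m) := by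
    intro m
    rw [hcdef]
    exact Function.iterate_succ_apply' p m bs
  have hcrep : ∀ m, eN σ hout (c m) = c m := by
    intro m
    induction m with
    | zero => exact hbs_rep
    | succ m _ => rw [hcs m, hpdef]; exact eN_idem σ hout _
  have hcd : ∀ m, 0 < DN σ hout (c m) → DN σ hout (c (m + 1)) < DN σ hout (c m) := by
    intro m h
    have hrep := hcrep m
    have hd : 0 < dY hout (c m) := by rw [← DN_rep σ hout hrep]; exact h
    have hstep : c (m + 1) = eN σ hout (sY hout (c m)) := by
      rw [hcs m, hpdef]; simp only []; rw [hrep]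
    have e1 : DN σ hout (c (m + 1)) = dY hout (c (m + 1)) := DN_rep σ hout (hcrep (m + 1))
    have e2 : dY hout (c (m + 1)) ≤ dY hout (sY hout (c m)) := by
      rw [hstep]; exact dY_eN_le σ hout _
    have e3 := dY_sY hout hd
    have e4 : DN σ hout (c m) = dY hout (c m) := DN_rep σ hout hrep
    omega
  have hcfix : ∀ m, DN σ hout (c m) = 0 → c (m + 1) = c m := by
    intro m h
    have hrep := hcrep m
    have hd : dY hout (c m) = 0 := by rw [← DN_rep σ hout hrep]; exact h
    rw [hcs m, hpdef]
    simp only []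
    rw [hrep, sY_eq_self hout hd, hrep]
  have hcni : ∀ a b, a ≤ b → DN σ hout (c b) ≤ DN σ hout (c a) := by
    intro a b hab
    induction b with
    | zero => obtain rfl := Nat.le_zero.mp hab; exact le_refl _
    | succ b ih =>
        rcases Nat.lt_or_ge a (b + 1) with hlt | hge
        · have h1 : DN σ hout (c (b + 1)) ≤ DN σ hout (c b) := by
            by_cases h : 0 < DN σ hout (c b)
            · exact le_of_lt (hcd b h)
            · rw [hcfix b (by omega)]
          exact le_trans h1 (ih (by omega))
        · have : a = b + 1 := by omega
          rw [this]
  -- every nonzero block is on the chain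
  have hG : ∀ b, b ∈ TS → ∃ m, c m = b := by
    set S := Finset.univ.sup (DN σ hout) with hSdef
    have hbound : ∀ b : V, DN σ hout b ≤ S := fun b =>
      Finset.le_sup (Finset.mem_univ b)
    suffices h : ∀ t b, b ∈ TS → S + 1 - DN σ hout b ≤ t → ∃ m, c m = b by
      intro b hb
      exact h (S + 1) b hb (by omega)
    intro t
    induction t with
    | zero =>
        intro b hb hle
        have := hbound b
        omega
    | succ t ih =>
        intro b hb hle
        obtain ⟨hb_rep, x1, hx1, hx1ne⟩ := (hmemTS b).mp hb
        by_cases hsrc : ∀ i, eN σ hout i = i → 0 < dY hout i → eN σ hout (sY hout i) = b → v i = 0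
        · exact ⟨0, by rw [hc0, huniq b hb hsrc]⟩
        · push_neg at hsrc
          obtain ⟨i, hrep, hd, hsb, hvi⟩ := hsrc
          have hiTS : i ∈ TS := (hmemTS i).mpr ⟨hrep, i, hrep, hvi⟩
          have hDi : DN σ hout b < DN σ hout i := by
            have h1 : DN σ hout i = dY hout i := DN_rep σ hout hrep
            have h2 : DN σ hout b = dY hout b := DN_rep σ hout hb_rep
            have h3 : dY hout b = dY hout (eN σ hout (sY hout i)) := by rw [hsb]
            have h4 := dY_eN_le σ hout (sY hout i)
            have h5 := dY_sY hout hd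
            omega
          obtain ⟨m, hm⟩ := ih i hiTS (by have := hbound i; omega)
          refine ⟨m + 1, ?_⟩
          rw [hcs m, hm, hpdef]
          simp only []
          rw [hrep, hsb]
  -- descend the chain to an output node
  have hdesc : ∀ k m, DN σ hout (c m) = k → (∀ x, eN σ hout x = c m → v x ≠ 0) →
      ∃ y, dY hout y = 0 ∧ v y ≠ 0 := by
    intro k
    induction k using Nat.strong_induction_on with
    | _ k ih =>
      intro m hk hall
      rcases Nat.eq_zero_or_pos k with rfl | hkpos
      · exact ⟨c m, by rw [← DN_rep σ hout (hcrep m)]; exact hk, hall _ (hcrep m)⟩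
      · have hrep := hcrep m
        have hdcm : 0 < dY hout (c m) := by rw [← DN_rep σ hout hrep]; omega
        have hγ : v (c m) ≠ 0 := hall (c m) hrep
        have hcm1 : c (m + 1) = eN σ hout (sY hout (c m)) := by
          rw [hcs m, hpdef]; simp only []; rw [hrep]
        have hrow' : ∀ j, eN σ hout j = c (m + 1) →
            (rN σ hout (c (m + 1)) : ℂ) * v (σ.symm j) +
              (if j = sY hout (c m) then v (c m) else 0) = lam * v j := by
          intro j hj
          have hkey : ∀ i ∈ Xf σ hout j, i ≠ c m → v i = 0 := by
            intro i hi hne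
            by_contra hvi
            rw [Xf, Finset.mem_filter] at hi
            obtain ⟨-, hrep_i, hd_i, hs_i⟩ := hi
            have hiTS : i ∈ TS := (hmemTS i).mpr ⟨hrep_i, i, hrep_i, hvi⟩
            obtain ⟨jdx, hjdx⟩ := hG i hiTS
            have hpi : c (jdx + 1) = c (m + 1) := by
              rw [hcs jdx, hjdx, hpdef]
              simp only []
              rw [hrep_i, hs_i, hj]
            rcases lt_trichotomy jdx m with hlt | heq | hgt
            · have h1 := hcd m (by omega)
              have h2 := hcni (jdx + 1) m (by omega)
              rw [hpi] at h2
              omega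
            · exact hne (by rw [← hjdx, heq])
            · have hdi : 0 < DN σ hout (c jdx) := by
                rw [hjdx, DN_rep σ hout hrep_i]; exact hd_i
              have h1 := hcd jdx hdi
              have h2 := hcni (m + 1) jdx (by omega)
              rw [hpi] at h1
              omega
          have hXf : ∑ i ∈ Xf σ hout j, v i = (if j = sY hout (c m) then v (c m) else 0) := by
            by_cases hjz : j = sY hout (c m)
            · rw [if_pos hjz]
              apply Finset.sum_eq_single_of_mem (c m)
              · rw [Xf, Finset.mem_filter]
                exact ⟨Finset.mem_univ _, hrep, hdcm, hjz.symm⟩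
              · intro i hi hne
                exact hkey i hi hne
            · rw [if_neg hjz]
              apply Finset.sum_eq_zero
              intro i hi
              by_cases hne : i = c m
              · exfalso
                rw [Xf, Finset.mem_filter, hne] at hi
                exact hjz hi.2.2.2.symm
              · exact hkey i hi hne
          have h := hrow j
          rw [hXf] at h
          rwa [rN_const σ hout (hj.trans (hcrep (m + 1)).symm)] at h
        have hallnext := block_feed σ hout hlam hγ hcm1.symm hrow'
        have hklt : DN σ hout (c (m + 1)) < k := by
          rw [← hk]; exact hcd m (by omega)
        exact ih (DN σ hout (c (m + 1))) hklt (m + 1) rfl hallnext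
  exact hdesc (DN σ hout bs) 0 (by rw [hc0]) (by rw [hc0]; exact hallbs)

end Eig

section Real
variable {E : V → V → Prop} {Y : Set V} (σ : Equiv.Perm V)
variable (hout : ∀ i : V, ∃ y ∈ Y, Relation.ReflTransGen E i y)

/-- the concrete observable realization supported inside the pattern. -/
def A0 : Matrix V V ℝ := Matrix.of fun j i =>
  (if j = σ i then (rN σ hout i : ℝ) else 0) +
  (if eN σ hout i = i ∧ 0 < dY hout i ∧ sY hout i = j then 1 else 0)

lemma A0_support (hσ : ∀ i, E i (σ i)) {i j : V} (h : ¬ E i j) :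
    A0 σ hout j i = 0 := by
  show (if j = σ i then (rN σ hout i : ℝ) else 0) +
    (if eN σ hout i = i ∧ 0 < dY hout i ∧ sY hout i = j then 1 else 0) = 0
  rw [if_neg, if_neg, add_zero]
  · rintro ⟨-, hd, hs⟩
    exact h (hs ▸ sY_edge hout hd)
  · rintro rfl
    exact h (hσ i)

lemma A0_row (v : V → ℂ) (j : V) :
    (∑ i, ((A0 σ hout j i : ℝ) : ℂ) * v i)
      = (rN σ hout j : ℂ) * v (σ.symm j) + ∑ i ∈ Xf σ hout j, v i := by
  have expand : ∀ i, ((A0 σ hout j i : ℝ) : ℂ) * v i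
      = (if i = σ.symm j then (rN σ hout i : ℂ) * v i else 0) +
        (if eN σ hout i = i ∧ 0 < dY hout i ∧ sY hout i = j then v i else 0) := by
    intro i
    show (((if j = σ i then (rN σ hout i : ℝ) else 0) +
      (if eN σ hout i = i ∧ 0 < dY hout i ∧ sY hout i = j then 1 else 0) : ℝ) : ℂ) * v i = _
    push_cast [apply_ite (fun x : ℝ => (x : ℂ))]
    rw [add_mul]
    congr 1
    · by_cases h : i = σ.symm j
      · rw [if_pos h, if_pos (by rw [h, Equiv.apply_symm_apply])]
      · rw [if_neg h, if_neg, zero_mul]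
        intro hj
        exact h (by rw [hj, Equiv.symm_apply_apply])
    · by_cases h : eN σ hout i = i ∧ 0 < dY hout i ∧ sY hout i = j
      · rw [if_pos h, if_pos h, one_mul]
      · rw [if_neg h, if_neg h, zero_mul]
  rw [Finset.sum_congr rfl (fun i _ => expand i), Finset.sum_add_distrib]
  congr 1
  · rw [Finset.sum_ite_eq' Finset.univ (σ.symm j) (fun i => (rN σ hout i : ℂ) * v i),
      if_pos (Finset.mem_univ _)]
    congr 2
    have h := eN_apply σ hout (σ.symm j)
    rw [Equiv.apply_symm_apply] at h
    exact_mod_cast congrArg (fun t => ((t : ℕ) : ℂ)) (rN_const σ hout h.symm)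
  · rw [Xf, Finset.sum_filter]

/-- complex observability of the concrete realization. -/
theorem obs_complex (x : V → ℂ)
    (hx : ∀ k : ℕ, ∀ y ∈ Y, ((((A0 σ hout).map (fun t : ℝ => (t : ℂ))) ^ k).mulVec x) y = 0) :
    x = 0 := by
  by_contra hx0
  set Ac := (A0 σ hout).map (fun t : ℝ => (t : ℂ)) with hAc
  set N : Submodule ℂ (V → ℂ) :=
    { carrier := {u | ∀ k : ℕ, ∀ y ∈ Y, ((Ac ^ k).mulVec u) y = 0}
      add_mem' := by
        intro a b ha hb k y hy
        rw [Matrix.mulVec_add]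
        simpa using by rw [ha k y hy, hb k y hy]; simp
      zero_mem' := by
        intro k y hy
        rw [Matrix.mulVec_zero]
        rfl
      smul_mem' := by
        intro c a ha k y hy
        rw [Matrix.mulVec_smul]
        simpa using by rw [ha k y hy]; simp } with hNdef
  have hmemN : ∀ u : V → ℂ, u ∈ N ↔ ∀ k : ℕ, ∀ y ∈ Y, ((Ac ^ k).mulVec u) y = 0 := by
    intro u; rfl
  have hxN : x ∈ N := (hmemN x).mpr hx
  haveI : Nontrivial N :=
    ⟨⟨⟨x, hxN⟩, 0, fun h => hx0 (by simpa using congrArg Subtype.val h)⟩⟩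
  have hinv : ∀ u ∈ N, Ac.mulVecLin u ∈ N := by
    intro u hu
    rw [hmemN] at hu ⊢
    intro k y hy
    rw [Matrix.mulVecLin_apply, Matrix.mulVec_mulVec, ← pow_succ]
    exact hu (k + 1) y hy
  set f : Module.End ℂ N := (Ac.mulVecLin).restrict hinv with hfdef
  obtain ⟨μ, hμ⟩ := Module.End.exists_eigenvalue f
  obtain ⟨w, hw⟩ := hμ.exists_hasEigenvector
  have hweq : Ac.mulVec (w : V → ℂ) = μ • (w : V → ℂ) := by
    have h1 : ((f w : N) : V → ℂ) = Ac.mulVec (w : V → ℂ) := by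
      rw [hfdef, LinearMap.restrict_coe_apply, Matrix.mulVecLin_apply]
    have h2 : f w = μ • w := hw.apply_eq_smul
    rw [← h1, h2]
    rfl
  have hwne : (w : V → ℂ) ≠ 0 := by
    intro h
    exact hw.2 (by exact_mod_cast Subtype.ext h)
  have hrow : ∀ j, (rN σ hout j : ℂ) * (w : V → ℂ) (σ.symm j) +
      ∑ i ∈ Xf σ hout j, (w : V → ℂ) i = μ * (w : V → ℂ) j := by
    intro j
    have h1 : (Ac.mulVec (w : V → ℂ)) j = ∑ i, ((A0 σ hout j i : ℝ) : ℂ) * (w : V → ℂ) i := by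
      rfl
    have h2 := A0_row σ hout (w : V → ℂ) j
    rw [← h2, ← h1, hweq]
    simp
  obtain ⟨y, hy0, hyne⟩ := eig_output σ hout hrow hwne
  have hyY : y ∈ Y := (dY_eq_zero_iff hout).mp hy0
  have := w.2 0 y hyY
  rw [pow_zero, Matrix.one_mulVec] at this
  exact hyne this

/-- real observability of the concrete realization. -/
theorem obs_real (x : V → ℝ)
    (hx : ∀ k : ℕ, ∀ y ∈ Y, (((A0 σ hout) ^ k).mulVec x) y = 0) : x = 0 := by
  have key : ∀ k : ℕ, ∀ y ∈ Y,
      ((((A0 σ hout).map (fun t : ℝ => (t : ℂ))) ^ k).mulVec (fun i => (x i : ℂ))) y = 0 := by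
    intro k y hy
    have hmap : ((A0 σ hout).map (fun t : ℝ => (t : ℂ))) ^ k
        = ((A0 σ hout) ^ k).map (fun t : ℝ => (t : ℂ)) := by
      have h1 : (A0 σ hout).map (fun t : ℝ => (t : ℂ))
          = Complex.ofRealHom.mapMatrix (A0 σ hout) := rfl
      rw [h1, ← map_pow]
      rfl
    rw [hmap]
    show (∑ i, (((((A0 σ hout) ^ k) y i : ℝ)) : ℂ) * (x i : ℂ)) = 0
    have : ∀ i, (((((A0 σ hout) ^ k) y i : ℝ)) : ℂ) * (x i : ℂ)
        = ((((A0 σ hout) ^ k) y i * x i : ℝ) : ℂ) := by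
      intro i; push_cast; ring
    rw [Finset.sum_congr rfl fun i _ => this i, ← Complex.ofReal_sum]
    rw [Complex.ofReal_eq_zero]
    exact hx k y hy
  have := obs_complex σ hout _ key
  funext i
  have hi := congrFun this i
  simpa using hi

end Real

section CH
variable [Nonempty V]

lemma sum_mulVec {ι : Type} (s : Finset ι) (A : ι → Matrix V V ℝ) (x : V → ℝ) :
    (∑ i ∈ s, A i).mulVec x = ∑ i ∈ s, (A i).mulVec x := by
  funext y
  rw [Finset.sum_apply]
  show ∑ j, (∑ i ∈ s, A i) y j * x j = _
  rw [Finset.sum_congr rfl (fun j _ => by rw [Matrix.sum_apply, Finset.sum_mul])]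
  exact Finset.sum_comm

lemma obs_of_lt (M : Matrix V V ℝ) (x : V → ℝ) (Z : Set V)
    (h : ∀ k < Fintype.card V, ∀ y ∈ Z, ((M ^ k).mulVec x) y = 0) :
    ∀ k : ℕ, ∀ y ∈ Z, ((M ^ k).mulVec x) y = 0 := by
  set n := Fintype.card V with hn
  have hnpos : 0 < n := Fintype.card_pos
  have hdeg : M.charpoly.natDegree = n := M.charpoly_natDegree_eq_dim
  have h0 : (0 : Matrix V V ℝ) = ∑ i ∈ Finset.range (n + 1), M.charpoly.coeff i • M ^ i := by
    have hh := M.aeval_self_charpoly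
    rw [Polynomial.aeval_eq_sum_range, hdeg] at hh
    exact hh.symm
  have hcn : M.charpoly.coeff n = 1 := by
    have := (Matrix.charpoly_monic M).coeff_natDegree
    rwa [hdeg] at this
  have hMn : M ^ n = -∑ i ∈ Finset.range n, M.charpoly.coeff i • M ^ i := by
    rw [Finset.sum_range_succ, hcn, one_smul] at h0
    exact (neg_eq_of_add_eq_zero_right h0.symm).symm
  intro k
  induction k using Nat.strong_induction_on with
  | _ k ihk =>
    intro y hy
    by_cases hk : k < n
    · exact h k hk y hy
    · push_neg at hk
      have hMk : M ^ k = ∑ i ∈ Finset.range n, (-(M.charpoly.coeff i)) • M ^ (k - n + i) := by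
        have hkeq : k - n + n = k := by omega
        calc M ^ k = M ^ (k - n) * M ^ n := by rw [← pow_add, hkeq]
          _ = M ^ (k - n) * -∑ i ∈ Finset.range n, M.charpoly.coeff i • M ^ i := by rw [hMn]
          _ = -∑ i ∈ Finset.range n, M ^ (k - n) * (M.charpoly.coeff i • M ^ i) := by
              rw [mul_neg, Finset.mul_sum]
          _ = ∑ i ∈ Finset.range n, (-(M.charpoly.coeff i)) • M ^ (k - n + i) := by
              rw [← Finset.sum_neg_distrib]
              apply Finset.sum_congr rfl
              intro i _
              rw [mul_smul_comm, ← pow_add, neg_smul]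
      rw [hMk, sum_mulVec]
      rw [Finset.sum_apply]
      apply Finset.sum_eq_zero
      intro i hi
      rw [Finset.mem_range] at hi
      rw [Matrix.smul_mulVec, Pi.smul_apply,
        ihk (k - n + i) (by omega) y hy, smul_zero]

end CH

section Trans
variable (Y : Set V) [Fintype ↥Y]

/-- truncated observability matrix. -/
def ObsM (R : Type) [CommRing R] (M : Matrix V V R) :
    Matrix ((Fin (Fintype.card V)) × ↥Y) V R :=
  Matrix.of fun p i => (M ^ (p.1 : ℕ)) (p.2 : V) i

/-- Gram determinant of the truncated observability matrix. -/
def gramDet (R : Type) [CommRing R] (M : Matrix V V R) : R :=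
  ((ObsM Y R M)ᵀ * ObsM Y R M).det

lemma obsM_map {R S : Type} [CommRing R] [CommRing S] (f : R →+* S) (M : Matrix V V R) :
    ObsM Y S (f.mapMatrix M) = (ObsM Y R M).map f := by
  ext p i
  show ((f.mapMatrix M) ^ (p.1 : ℕ)) (p.2 : V) i = f ((M ^ (p.1 : ℕ)) (p.2 : V) i)
  rw [← map_pow, RingHom.mapMatrix_apply, Matrix.map_apply]

lemma gramDet_map {R S : Type} [CommRing R] [CommRing S] (f : R →+* S) (M : Matrix V V R) :
    gramDet Y S (f.mapMatrix M) = f (gramDet Y R M) := by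
  rw [gramDet, gramDet, obsM_map, RingHom.map_det]
  congr 1
  rw [RingHom.mapMatrix_apply, Matrix.map_mul, Matrix.transpose_map]

lemma gram_ne_of_inj (O : Matrix ((Fin (Fintype.card V)) × ↥Y) V ℝ)
    (hO : ∀ x : V → ℝ, O.mulVec x = 0 → x = 0) : (Oᵀ * O).det ≠ 0 := by
  intro hdet
  obtain ⟨v, hv0, hGv⟩ := Matrix.exists_mulVec_eq_zero_iff.mpr hdet
  have h1 : (O.mulVec v) ⬝ᵥ (O.mulVec v) = 0 := by
    calc (O.mulVec v) ⬝ᵥ (O.mulVec v)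
        = (Matrix.vecMul v Oᵀ) ⬝ᵥ (O.mulVec v) := by rw [Matrix.vecMul_transpose]
      _ = v ⬝ᵥ (Oᵀ.mulVec (O.mulVec v)) := (Matrix.dotProduct_mulVec _ _ _).symm
      _ = v ⬝ᵥ ((Oᵀ * O).mulVec v) := by rw [Matrix.mulVec_mulVec]
      _ = 0 := by rw [hGv, dotProduct_zero]
  have h2 : O.mulVec v = 0 := by
    funext p
    have hterm := (Finset.sum_eq_zero_iff_of_nonneg
      (fun q _ => mul_self_nonneg ((O.mulVec v) q))).mp h1 p (Finset.mem_univ p)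
    exact mul_self_eq_zero.mp hterm
  exact hv0 (hO v h2)

lemma inj_of_gram_ne (O : Matrix ((Fin (Fintype.card V)) × ↥Y) V ℝ)
    (hdet : (Oᵀ * O).det ≠ 0) : ∀ x : V → ℝ, O.mulVec x = 0 → x = 0 := by
  intro x hOx
  by_contra hx0
  apply hdet
  apply Matrix.exists_mulVec_eq_zero_iff.mp
  refine ⟨x, hx0, ?_⟩
  rw [← Matrix.mulVec_mulVec, hOx, Matrix.mulVec_zero]

end Trans
end StructObs

open StructObs in
/-- Sufficiency direction of Theorem 1: a cyclic, output-connected system digraph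
is structurally observable: there is a realization `A` of the digraph pattern such
that the pair `(A, C_Y)` is observable. -/
theorem cyclic_output_connected_structurally_observable
    (V : Type) [Fintype V] [Nonempty V] [DecidableEq V]
    (E : V → V → Prop) (Y : Set V)
    (hcyc : ∃ σ : Equiv.Perm V, ∀ i : V, E i (σ i))
    (hout : ∀ i : V, ∃ y ∈ Y, Relation.ReflTransGen E i y) :
    ∃ A : Matrix V V ℝ,
      (∀ i j : V, A i j ≠ 0 ↔ E j i) ∧
      (∀ x : V → ℝ,
        (∀ k : ℕ,
          (Matrix.of fun (y : Y) (j : V) => if (y : V) = j then (1 : ℝ) else 0).mulVec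
            ((A ^ k).mulVec x) = 0) → x = 0) := by
  classical
  obtain ⟨σ, hσ⟩ := hcyc
  letI : Fintype ↥Y := Set.Finite.fintype (Set.toFinite Y)
  -- the output matrix extracts the coordinates in `Y`
  have hC : ∀ (u : V → ℝ) (y : ↥Y),
      ((Matrix.of fun (y : Y) (j : V) => if (y : V) = j then (1 : ℝ) else 0).mulVec u) y
        = u (y : V) := by
    intro u y
    show (∑ j, (if (y : V) = j then (1 : ℝ) else 0) * u j) = u (y : V)
    rw [Finset.sum_congr rfl (fun j _ => by rw [ite_mul, one_mul, zero_mul])]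
    simp [Finset.sum_ite_eq]
  -- the generic pattern matrix over the polynomial ring
  set R := MvPolynomial (V × V) ℝ with hR
  set Ap : Matrix V V R :=
    Matrix.of fun j i => if E i j then MvPolynomial.X (j, i) else 0 with hAp
  set P : R := gramDet Y R Ap with hP
  -- evaluation at the concrete realization
  set w₀ : V × V → ℝ := fun q => A0 σ hout q.1 q.2 with hw₀
  have hmap0 : (MvPolynomial.eval w₀).mapMatrix Ap = A0 σ hout := by
    ext j i
    rw [RingHom.mapMatrix_apply, Matrix.map_apply]
    show MvPolynomial.eval w₀ (if E i j then MvPolynomial.X (j, i) else 0) = A0 σ hout j i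
    by_cases hE : E i j
    · rw [if_pos hE, MvPolynomial.eval_X]
    · rw [if_neg hE, map_zero, A0_support σ hout hσ hE]
  -- the concrete realization has nonzero Gram determinant
  have hinj : ∀ x : V → ℝ, (ObsM Y ℝ (A0 σ hout)).mulVec x = 0 → x = 0 := by
    intro x hx
    apply obs_real σ hout
    apply obs_of_lt
    intro k hk y hy
    have hrow := congrFun hx (⟨⟨k, hk⟩, ⟨y, hy⟩⟩ : (Fin (Fintype.card V)) × ↥Y)
    exact hrow
  have hgram0 : gramDet Y ℝ (A0 σ hout) ≠ 0 := gram_ne_of_inj Y _ hinj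
  have hPne : P ≠ 0 := by
    intro h
    apply hgram0
    rw [← hmap0, gramDet_map, ← hP, h, map_zero]
  -- a generic evaluation point keeping all pattern entries nonzero
  set edges : Finset (V × V) := Finset.univ.filter (fun q : V × V => E q.2 q.1) with hedges
  set Q : R := P * ∏ q ∈ edges, MvPolynomial.X q with hQ
  have hQne : Q ≠ 0 :=
    mul_ne_zero hPne (Finset.prod_ne_zero_iff.mpr fun q _ => MvPolynomial.X_ne_zero q)
  have hex : ∃ w : V × V → ℝ, MvPolynomial.eval w Q ≠ 0 := by
    by_contra h
    push_neg at h
    exact hQne (MvPolynomial.funext (fun w => by rw [h w, map_zero]))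
  obtain ⟨w, hwQ⟩ := hex
  rw [hQ, map_mul] at hwQ
  have hwP : MvPolynomial.eval w P ≠ 0 := fun h => hwQ (by rw [h, zero_mul])
  have hwE : ∀ q ∈ edges, w q ≠ 0 := by
    intro q hq
    have hprod : MvPolynomial.eval w (∏ q ∈ edges, MvPolynomial.X q) ≠ 0 :=
      fun h => hwQ (by rw [h, mul_zero])
    rw [map_prod] at hprod
    have := Finset.prod_ne_zero_iff.mp hprod q hq
    rwa [MvPolynomial.eval_X] at this
  -- the realization
  set A : Matrix V V ℝ := Matrix.of fun j i => if E i j then w (j, i) else 0 with hA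
  have hmapA : (MvPolynomial.eval w).mapMatrix Ap = A := by
    ext j i
    rw [RingHom.mapMatrix_apply, Matrix.map_apply]
    show MvPolynomial.eval w (if E i j then MvPolynomial.X (j, i) else 0)
      = (if E i j then w (j, i) else 0)
    by_cases hE : E i j
    · rw [if_pos hE, if_pos hE, MvPolynomial.eval_X]
    · rw [if_neg hE, if_neg hE, map_zero]
  have hgramA : gramDet Y ℝ A ≠ 0 := by
    rw [← hmapA, gramDet_map]
    exact hwP
  refine ⟨A, ?_, ?_⟩
  · intro i j
    constructor
    · intro h
      by_contra hE
      apply h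
      show (if E j i then w (i, j) else 0) = 0
      rw [if_neg hE]
    · intro hE
      show (if E j i then w (i, j) else 0) ≠ 0
      rw [if_pos hE]
      exact hwE (i, j) (Finset.mem_filter.mpr ⟨Finset.mem_univ _, hE⟩)
  · intro x hx
    apply inj_of_gram_ne Y _ hgramA
    funext p
    have h1 := congrFun (hx (p.1 : ℕ)) p.2
    rw [hC] at h1
    show ∑ j, (A ^ (p.1 : ℕ)) (p.2 : V) j * x j = 0
    exact h1
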